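/- For every continuous compactly supported function φ: ℝ → ℝ and every y ≠ 0, one has the delta-approximation property lim_{t→0⁺} ∫_ℝ G(t,x,y)·φ(x)·ρ(x) dx = φ(y)·ρ(y), where ρ(x) = ρ₁ for x ≤ 0 and ρ(x) = ρ₂ for x > 0. -/

import Mathlib

open Real Set Filter MeasureTheory

noncomputable def fPiece (a₁ a₂ y : ℝ) : ℝ :=
  if y ≤ 0 then y / Real.sqrt a₁ else y / Real.sqrt a₂

noncomputable def signFun (y : ℝ) : ℝ :=
  if 0 < y then 1 else if y < 0 then -1 else 0

noncomputable def G (a₁ a₂ β t x y : ℝ) : ℝ :=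
  (1 / Real.sqrt (2 * Real.pi * t)) *
    (if y ≤ 0 then 1 / Real.sqrt a₁ else 1 / Real.sqrt a₂) *
    (Real.exp (-(fPiece a₁ a₂ x - fPiece a₁ a₂ y) ^ 2 / (2 * t)) +
      β * signFun y * Real.exp (-(|fPiece a₁ a₂ x| + |fPiece a₁ a₂ y|) ^ 2 / (2 * t)))

noncomputable def rhoFun (ρ₁ ρ₂ x : ℝ) : ℝ := if x ≤ 0 then ρ₁ else ρ₂

lemma myexp_neg_le {x : ℝ} (hx : 0 < x) : Real.exp (-x) ≤ 4 / x ^ 2 := by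
  have h1 : x / 2 ≤ Real.exp (x / 2) := by linarith [Real.add_one_le_exp (x / 2)]
  have h2 : (x / 2) ^ 2 ≤ Real.exp (x / 2) ^ 2 := by
    exact pow_le_pow_left₀ (by positivity) h1 2
  have h3 : Real.exp (x / 2) ^ 2 = Real.exp x := by
    rw [sq, ← Real.exp_add]; congr 1; ring
  have h4 : x ^ 2 / 4 ≤ Real.exp x := by
    rw [← h3]; nlinarith
  rw [Real.exp_neg]
  rw [inv_eq_one_div, div_le_div_iff₀ (Real.exp_pos x) (by positivity)]
  nlinarith [Real.exp_pos x]

lemma gauss_integrable {t : ℝ} (ht : 0 < t) (v : ℝ) :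
    Integrable (fun u : ℝ => Real.exp (-(u - v) ^ 2 / (2 * t))) := by
  have h : Integrable (fun u : ℝ => Real.exp (-(2 * t)⁻¹ * u ^ 2)) :=
    integrable_exp_neg_mul_sq (by positivity)
  have h2 := h.comp_sub_right v
  refine h2.congr ?_
  filter_upwards with u
  congr 1
  ring

lemma gauss_integral {t : ℝ} (ht : 0 < t) (v : ℝ) :
    ∫ u : ℝ, Real.exp (-(u - v) ^ 2 / (2 * t)) = Real.sqrt (2 * Real.pi * t) := by
  have h0 : (∫ u : ℝ, Real.exp (-(u - v) ^ 2 / (2 * t)))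
      = ∫ u : ℝ, Real.exp (-u ^ 2 / (2 * t)) :=
    integral_sub_right_eq_self (fun u : ℝ => Real.exp (-u ^ 2 / (2 * t))) v
  rw [h0]
  have h1 : (fun u : ℝ => Real.exp (-u ^ 2 / (2 * t)))
      = fun u : ℝ => Real.exp (-(2 * t)⁻¹ * u ^ 2) := by
    funext u; congr 1; ring
  rw [h1, integral_gaussian]
  congr 1
  field_simp

lemma exp_tail {K : ℝ} (hK : 0 < K) :
    Tendsto (fun t : ℝ => Real.exp (-(K / t))) (nhdsWithin 0 (Set.Ioi 0)) (nhds 0) := by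
  have h1 : Tendsto (fun t : ℝ => t⁻¹) (nhdsWithin 0 (Set.Ioi 0)) atTop :=
    tendsto_inv_nhdsGT_zero
  have h2 : Tendsto (fun s : ℝ => -(K * s)) atTop atBot :=
    tendsto_neg_atBot_iff.mpr (Tendsto.const_mul_atTop hK tendsto_id)
  have h3 := Real.tendsto_exp_atBot.comp (h2.comp h1)
  refine h3.congr fun t => ?_
  simp only [Function.comp_apply]
  ring_nf

lemma sqrt_inv_exp_tail (C : ℝ) {K : ℝ} (hK : 0 < K) :
    Tendsto (fun t : ℝ => (Real.sqrt (2 * Real.pi * t))⁻¹ * C * Real.exp (-(K / t)))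
      (nhdsWithin 0 (Set.Ioi 0)) (nhds 0) := by
  have h1 : Tendsto (fun s : ℝ => s ^ (1/2 : ℝ) * Real.exp (-K * s)) atTop (nhds 0) :=
    tendsto_rpow_mul_exp_neg_mul_atTop_nhds_zero _ _ hK
  have h2 : Tendsto (fun t : ℝ => ((Real.sqrt (2 * Real.pi))⁻¹ * C) *
      ((t⁻¹) ^ (1/2 : ℝ) * Real.exp (-K * t⁻¹))) (nhdsWithin 0 (Set.Ioi 0)) (nhds 0) := by
    have := (h1.comp (tendsto_inv_nhdsGT_zero (𝕜 := ℝ))).const_mul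
      ((Real.sqrt (2 * Real.pi))⁻¹ * C)
    simpa using this
  refine h2.congr' ?_
  filter_upwards [self_mem_nhdsWithin] with t (ht : (0:ℝ) < t)
  have e1 : (t⁻¹) ^ (1/2 : ℝ) = (Real.sqrt t)⁻¹ := by
    rw [← Real.sqrt_eq_rpow, Real.sqrt_inv]
  have e2 : Real.sqrt (2 * Real.pi * t) = Real.sqrt (2 * Real.pi) * Real.sqrt t :=
    Real.sqrt_mul (by positivity) t
  have e3 : -K * t⁻¹ = -(K / t) := by ring
  rw [e1, e2, e3, mul_inv]
  ring

lemma tail_Iic {v c : ℝ} (h : c < v) :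
    Tendsto (fun t : ℝ => (Real.sqrt (2 * Real.pi * t))⁻¹ *
        ∫ u in Iic c, Real.exp (-(u - v) ^ 2 / (2 * t)))
      (nhdsWithin 0 (Set.Ioi 0)) (nhds 0) := by
  have hK : 0 < (c - v) ^ 2 / 2 := by
    have h0 : c - v ≠ 0 := by intro hh; rw [sub_eq_zero] at hh; exact absurd hh (ne_of_lt h)
    positivity
  refine squeeze_zero' ?_ ?_ (exp_tail hK)
  · filter_upwards [self_mem_nhdsWithin] with t (ht : (0:ℝ) < t)
    have h1 : 0 ≤ ∫ u in Iic c, Real.exp (-(u - v) ^ 2 / (2 * t)) :=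
      setIntegral_nonneg measurableSet_Iic fun u _ => (Real.exp_pos _).le
    positivity
  · filter_upwards [self_mem_nhdsWithin] with t (ht : (0:ℝ) < t)
    have hS : (0:ℝ) < Real.sqrt (2 * Real.pi * t) := by positivity
    set gfun : ℝ → ℝ := fun u => Real.exp (-(c - v) ^ 2 / (2 * t)) * Real.exp (-(u - c) ^ 2 / (2 * t))
      with hgfun
    have hgint : Integrable gfun := (gauss_integrable ht c).const_mul _
    have step1 : (∫ u in Iic c, Real.exp (-(u - v) ^ 2 / (2 * t))) ≤ ∫ u in Iic c, gfun u := by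
      refine setIntegral_mono_on (gauss_integrable ht v).integrableOn
        hgint.integrableOn measurableSet_Iic ?_
      intro u hu
      rw [mem_Iic] at hu
      rw [hgfun]
      simp only
      rw [← Real.exp_add]
      apply Real.exp_le_exp.2
      rw [← add_div, div_le_div_iff_of_pos_right (by linarith : (0:ℝ) < 2 * t)]
      nlinarith [mul_nonneg (sub_nonneg.2 hu) (sub_nonneg.2 h.le)]
    have step2 : (∫ u in Iic c, gfun u) ≤ ∫ u : ℝ, gfun u := by
      refine setIntegral_le_integral hgint ?_
      filter_upwards with u
      simp only [hgfun, Pi.zero_apply]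
      positivity
    have step3 : (∫ u : ℝ, gfun u)
        = Real.exp (-(c - v) ^ 2 / (2 * t)) * Real.sqrt (2 * Real.pi * t) := by
      rw [hgfun]
      rw [integral_const_mul, gauss_integral ht]
    calc (Real.sqrt (2 * Real.pi * t))⁻¹ * ∫ u in Iic c, Real.exp (-(u - v) ^ 2 / (2 * t))
        ≤ (Real.sqrt (2 * Real.pi * t))⁻¹ *
          (Real.exp (-(c - v) ^ 2 / (2 * t)) * Real.sqrt (2 * Real.pi * t)) := by
          refine mul_le_mul_of_nonneg_left ?_ (by positivity)
          calc (∫ u in Iic c, Real.exp (-(u - v) ^ 2 / (2 * t))) ≤ ∫ u in Iic c, gfun u := step1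
            _ ≤ ∫ u : ℝ, gfun u := step2
            _ = _ := step3
      _ = Real.exp (-(c - v) ^ 2 / (2 * t)) := by
          field_simp
      _ = Real.exp (-((c - v) ^ 2 / 2 / t)) := by
          congr 1; field_simp

lemma tail_Ioi {v c : ℝ} (h : v < c) :
    Tendsto (fun t : ℝ => (Real.sqrt (2 * Real.pi * t))⁻¹ *
        ∫ u in Ioi c, Real.exp (-(u - v) ^ 2 / (2 * t)))
      (nhdsWithin 0 (Set.Ioi 0)) (nhds 0) := by
  have h' : -c < -v := by linarith
  refine (tail_Iic h').congr fun t => ?_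
  congr 1
  have hrefl := integral_comp_neg_Iic (-c)
    (fun u : ℝ => Real.exp (-(u - v) ^ 2 / (2 * t)))
  rw [neg_neg] at hrefl
  rw [← hrefl]
  refine setIntegral_congr_fun measurableSet_Iic fun u _ => ?_
  congr 1
  ring

lemma main_Ioc {l r u₀ : ℝ} (h1 : l < u₀) (h2 : u₀ < r) :
    Tendsto (fun t : ℝ => (Real.sqrt (2 * Real.pi * t))⁻¹ *
        ∫ u in Ioc l r, Real.exp (-(u - u₀) ^ 2 / (2 * t)))
      (nhdsWithin 0 (Set.Ioi 0)) (nhds 1) := by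
  have hlr : l ≤ r := le_trans h1.le h2.le
  have tl := tail_Iic (v := u₀) (c := l) h1
  have tr := tail_Ioi (v := u₀) (c := r) h2
  have comb : Tendsto (fun t : ℝ =>
      1 - ((Real.sqrt (2 * Real.pi * t))⁻¹ * ∫ u in Iic l, Real.exp (-(u - u₀) ^ 2 / (2 * t)))
        - ((Real.sqrt (2 * Real.pi * t))⁻¹ * ∫ u in Ioi r, Real.exp (-(u - u₀) ^ 2 / (2 * t))))
      (nhdsWithin 0 (Set.Ioi 0)) (nhds 1) := by
    have hc := ((tendsto_const_nhds
      (x := (1:ℝ)) (f := nhdsWithin (0:ℝ) (Set.Ioi 0))).sub tl).sub tr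
    simpa using hc
  refine comb.congr' ?_
  filter_upwards [self_mem_nhdsWithin] with t (ht : (0:ℝ) < t)
  have hi := gauss_integrable ht u₀
  have hS : (0:ℝ) < Real.sqrt (2 * Real.pi * t) := by positivity
  have e1 : (∫ u in Iic l, Real.exp (-(u - u₀) ^ 2 / (2 * t)))
      + (∫ u in Ioc l r, Real.exp (-(u - u₀) ^ 2 / (2 * t)))
      = ∫ u in Iic r, Real.exp (-(u - u₀) ^ 2 / (2 * t)) := by
    rw [← setIntegral_union (Iic_disjoint_Ioc le_rfl) measurableSet_Ioc
      hi.integrableOn hi.integrableOn, Iic_union_Ioc_eq_Iic hlr]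
  have e2 : (∫ u in Iic r, Real.exp (-(u - u₀) ^ 2 / (2 * t)))
      + (∫ u in Ioi r, Real.exp (-(u - u₀) ^ 2 / (2 * t)))
      = Real.sqrt (2 * Real.pi * t) := by
    rw [intervalIntegral.integral_Iic_add_Ioi hi.integrableOn hi.integrableOn, gauss_integral ht]
  have hs' : (Real.sqrt (2 * Real.pi * t))⁻¹ * Real.sqrt (2 * Real.pi * t) = 1 :=
    inv_mul_cancel₀ hS.ne'
  calc 1 - ((Real.sqrt (2 * Real.pi * t))⁻¹ * ∫ u in Iic l, Real.exp (-(u - u₀) ^ 2 / (2 * t)))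
        - ((Real.sqrt (2 * Real.pi * t))⁻¹ * ∫ u in Ioi r, Real.exp (-(u - u₀) ^ 2 / (2 * t)))
      = (Real.sqrt (2 * Real.pi * t))⁻¹ * (Real.sqrt (2 * Real.pi * t)
        - (∫ u in Iic l, Real.exp (-(u - u₀) ^ 2 / (2 * t)))
        - (∫ u in Ioi r, Real.exp (-(u - u₀) ^ 2 / (2 * t)))) := by
        rw [mul_sub, mul_sub, hs']
    _ = (Real.sqrt (2 * Real.pi * t))⁻¹ * ∫ u in Ioc l r, Real.exp (-(u - u₀) ^ 2 / (2 * t)) := by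
        congr 1
        linarith

lemma key_pos {b l r u₀ : ℝ} (hb : |b| ≤ 1) (h0 : 0 < l) (h1 : l < u₀) (h2 : u₀ < r) :
    Tendsto (fun t : ℝ => (Real.sqrt (2 * Real.pi * t))⁻¹ *
        ∫ u in Ioc l r, (Real.exp (-(u - u₀) ^ 2 / (2 * t))
          + b * Real.exp (-(u + u₀) ^ 2 / (2 * t))))
      (nhdsWithin 0 (Set.Ioi 0)) (nhds 1) := by
  have hA := main_Ioc h1 h2
  have hneg : -u₀ < l := by linarith
  have tB := tail_Ioi (v := -u₀) (c := l) hneg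
  have hB : Tendsto (fun t : ℝ => (Real.sqrt (2 * Real.pi * t))⁻¹ *
      (b * ∫ u in Ioc l r, Real.exp (-(u + u₀) ^ 2 / (2 * t))))
      (nhdsWithin 0 (Set.Ioi 0)) (nhds 0) := by
    refine squeeze_zero_norm' ?_ tB
    filter_upwards [self_mem_nhdsWithin] with t (ht : (0:ℝ) < t)
    have hS : (0:ℝ) < Real.sqrt (2 * Real.pi * t) := by positivity
    have hint : Integrable (fun u : ℝ => Real.exp (-(u + u₀) ^ 2 / (2 * t))) := by
      refine (gauss_integrable ht (-u₀)).congr ?_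
      filter_upwards with u
      congr 1 ; ring
    have hmono : (∫ u in Ioc l r, Real.exp (-(u + u₀) ^ 2 / (2 * t)))
        ≤ ∫ u in Ioi l, Real.exp (-(u + u₀) ^ 2 / (2 * t)) := by
      refine setIntegral_mono_set hint.integrableOn ?_ ?_
      · filter_upwards with u using (Real.exp_pos _).le
      · filter_upwards with u hu using Ioc_subset_Ioi_self hu
    have hnn : 0 ≤ ∫ u in Ioc l r, Real.exp (-(u + u₀) ^ 2 / (2 * t)) :=
      setIntegral_nonneg measurableSet_Ioc fun u _ => (Real.exp_pos _).le
    have heq : (∫ u in Ioi l, Real.exp (-(u - -u₀) ^ 2 / (2 * t)))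
        = ∫ u in Ioi l, Real.exp (-(u + u₀) ^ 2 / (2 * t)) := by
      refine setIntegral_congr_fun measurableSet_Ioi fun u _ => ?_
      congr 1 ; ring
    rw [norm_mul, norm_mul]
    rw [Real.norm_of_nonneg (by positivity : (0:ℝ) ≤ (Real.sqrt (2 * Real.pi * t))⁻¹)]
    rw [Real.norm_of_nonneg hnn, heq]
    refine mul_le_mul_of_nonneg_left ?_ (by positivity)
    calc ‖b‖ * (∫ u in Ioc l r, Real.exp (-(u + u₀) ^ 2 / (2 * t)))
        ≤ 1 * (∫ u in Ioc l r, Real.exp (-(u + u₀) ^ 2 / (2 * t))) :=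
          mul_le_mul_of_nonneg_right hb hnn
      _ = ∫ u in Ioc l r, Real.exp (-(u + u₀) ^ 2 / (2 * t)) := one_mul _
      _ ≤ _ := hmono
  have hsum := hA.add hB
  rw [add_zero] at hsum
  refine hsum.congr' ?_
  filter_upwards [self_mem_nhdsWithin] with t (ht : (0:ℝ) < t)
  have hint1 := (gauss_integrable ht u₀).integrableOn (s := Ioc l r)
  have hint2 : IntegrableOn (fun u : ℝ => b * Real.exp (-(u + u₀) ^ 2 / (2 * t))) (Ioc l r) := by
    refine Integrable.integrableOn ?_
    refine ((gauss_integrable ht (-u₀)).const_mul b).congr ?_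
    filter_upwards with u
    congr 2 ; ring
  rw [← mul_add]
  congr 1
  rw [integral_add hint1 hint2, integral_const_mul]

lemma key_neg {b l r u₀ : ℝ} (hb : |b| ≤ 1) (hr : r < 0) (h1 : l < u₀) (h2 : u₀ < r) :
    Tendsto (fun t : ℝ => (Real.sqrt (2 * Real.pi * t))⁻¹ *
        ∫ u in Ioc l r, (Real.exp (-(u - u₀) ^ 2 / (2 * t))
          + b * Real.exp (-(u + u₀) ^ 2 / (2 * t))))
      (nhdsWithin 0 (Set.Ioi 0)) (nhds 1) := by
  have K := key_pos (b := b) (l := -r) (r := -l) (u₀ := -u₀) hb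
    (by linarith) (by linarith) (by linarith)
  refine K.congr fun t => ?_
  congr 1
  have hlr : l ≤ r := le_trans h1.le h2.le
  have hlr' : -r ≤ -l := by linarith
  rw [← intervalIntegral.integral_of_le hlr, ← intervalIntegral.integral_of_le hlr']
  have hrefl := intervalIntegral.integral_comp_neg (a := l) (b := r)
    (fun u : ℝ => Real.exp (-(u - -u₀) ^ 2 / (2 * t)) + b * Real.exp (-(u + -u₀) ^ 2 / (2 * t)))
  rw [← hrefl]
  refine intervalIntegral.integral_congr fun u _ => ?_
  have e1 : (-(u : ℝ) - -u₀) ^ 2 = (u - u₀) ^ 2 := by ring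
  have e2 : (-(u : ℝ) + -u₀) ^ 2 = (u + u₀) ^ 2 := by ring
  rw [e1, e2]

lemma abs_signFun_le (y : ℝ) : |signFun y| ≤ 1 := by
  unfold signFun
  split_ifs <;> norm_num

lemma fPiece_lower {a₁ a₂ : ℝ} (ha₁ : 0 < a₁) (ha₂ : 0 < a₂) (x z : ℝ) :
    |x - z| / Real.sqrt (max a₁ a₂) ≤ |fPiece a₁ a₂ x - fPiece a₁ a₂ z| := by
  have hm : (0:ℝ) < Real.sqrt (max a₁ a₂) := Real.sqrt_pos.2 (lt_max_of_lt_left ha₁)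
  have h1 : Real.sqrt a₁ ≤ Real.sqrt (max a₁ a₂) := Real.sqrt_le_sqrt (le_max_left _ _)
  have h2 : Real.sqrt a₂ ≤ Real.sqrt (max a₁ a₂) := Real.sqrt_le_sqrt (le_max_right _ _)
  have hs1 : (0:ℝ) < Real.sqrt a₁ := Real.sqrt_pos.2 ha₁
  have hs2 : (0:ℝ) < Real.sqrt a₂ := Real.sqrt_pos.2 ha₂
  unfold fPiece
  rcases le_or_gt x 0 with hx | hx <;> rcases le_or_gt z 0 with hz | hz
  · rw [if_pos hx, if_pos hz, div_sub_div_same, abs_div, abs_of_pos hs1]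
    exact div_le_div_of_nonneg_left (abs_nonneg _) hs1 h1 |>.trans (le_refl _)
  · rw [if_pos hx, if_neg (not_le.2 hz)]
    have hfx : x / Real.sqrt a₁ ≤ 0 := div_nonpos_of_nonpos_of_nonneg hx hs1.le
    have hfz : 0 ≤ z / Real.sqrt a₂ := by positivity
    have i1 : z / Real.sqrt (max a₁ a₂) ≤ z / Real.sqrt a₂ :=
      div_le_div_of_nonneg_left hz.le hs2 h2
    have i2 : x / Real.sqrt a₁ ≤ x / Real.sqrt (max a₁ a₂) := by
      rw [div_le_div_iff₀ hs1 hm]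
      exact mul_le_mul_of_nonpos_left h1 hx
    rw [abs_of_nonpos (by linarith : x - z ≤ 0),
      abs_of_nonpos (by linarith : x / Real.sqrt a₁ - z / Real.sqrt a₂ ≤ 0)]
    rw [neg_sub, neg_sub, sub_div]
    have i3 : x / Real.sqrt (max a₁ a₂) ≤ x / Real.sqrt a₁ * 0 + x / Real.sqrt (max a₁ a₂) := by
      linarith
    linarith
  · rw [if_neg (not_le.2 hx), if_pos hz]
    have hfx : 0 ≤ x / Real.sqrt a₂ := by positivity
    have hfz : z / Real.sqrt a₁ ≤ 0 := div_nonpos_of_nonpos_of_nonneg hz hs1.le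
    have i1 : x / Real.sqrt (max a₁ a₂) ≤ x / Real.sqrt a₂ :=
      div_le_div_of_nonneg_left hx.le hs2 h2
    have i2 : z / Real.sqrt a₁ ≤ z / Real.sqrt (max a₁ a₂) := by
      rw [div_le_div_iff₀ hs1 hm]
      exact mul_le_mul_of_nonpos_left h1 hz
    rw [abs_of_nonneg (by linarith : 0 ≤ x - z),
      abs_of_nonneg (by linarith : 0 ≤ x / Real.sqrt a₂ - z / Real.sqrt a₁)]
    rw [sub_div]
    linarith
  · rw [if_neg (not_le.2 hx), if_neg (not_le.2 hz), div_sub_div_same, abs_div, abs_of_pos hs2]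
    exact div_le_div_of_nonneg_left (abs_nonneg _) hs2 h2

lemma exp_sq_le {a₁ a₂ t : ℝ} (ht : 0 < t) (x y : ℝ) :
    Real.exp (-(|fPiece a₁ a₂ x| + |fPiece a₁ a₂ y|) ^ 2 / (2 * t))
      ≤ Real.exp (-(fPiece a₁ a₂ x - fPiece a₁ a₂ y) ^ 2 / (2 * t)) := by
  apply Real.exp_le_exp.2
  rw [div_le_div_iff_of_pos_right (by linarith : (0:ℝ) < 2 * t)]
  apply neg_le_neg
  rw [← sq_abs (fPiece a₁ a₂ x - fPiece a₁ a₂ y)]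
  refine pow_le_pow_left₀ (abs_nonneg _) ?_ 2
  have := abs_sub_le (fPiece a₁ a₂ x) 0 (fPiece a₁ a₂ y)
  simpa using this

lemma G_nonneg {a₁ a₂ β : ℝ} (hβ1 : |β| ≤ 1) {t : ℝ} (ht : 0 < t) (x y : ℝ) :
    0 ≤ G a₁ a₂ β t x y := by
  unfold G
  have hE := exp_sq_le (a₁ := a₁) (a₂ := a₂) ht x y
  have hb1 : -1 ≤ β * signFun y := by
    have h := abs_mul β (signFun y)
    have h2 : |β * signFun y| ≤ 1 := by
      rw [h]
      calc |β| * |signFun y| ≤ 1 * 1 :=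
        mul_le_mul hβ1 (abs_signFun_le y) (abs_nonneg _) zero_le_one
      _ = 1 := one_mul 1
    linarith [neg_abs_le (β * signFun y)]
  have hE2 : 0 ≤ Real.exp (-(|fPiece a₁ a₂ x| + |fPiece a₁ a₂ y|) ^ 2 / (2 * t)) :=
    (Real.exp_pos _).le
  refine mul_nonneg (mul_nonneg (by positivity) ?_) ?_
  · split_ifs <;> positivity
  · have := mul_le_mul_of_nonneg_right hb1 hE2
    nlinarith

theorem G_delta_approximation (a₁ a₂ ρ₁ ρ₂ α β : ℝ)
    (ha₁ : 0 < a₁) (ha₂ : 0 < a₂) (hρ₁ : 0 < ρ₁) (hρ₂ : 0 < ρ₂)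
    (hα : α = 1 - ρ₁ * a₁ / (ρ₂ * a₂))
    (hβ : β = (Real.sqrt a₁ + Real.sqrt a₂ * (α - 1)) /
      (Real.sqrt a₁ - Real.sqrt a₂ * (α - 1)))
    (φ : ℝ → ℝ) (hφ : Continuous φ) (hφc : HasCompactSupport φ)
    (y : ℝ) (hy : y ≠ 0) :
    Filter.Tendsto (fun t => ∫ x : ℝ, G a₁ a₂ β t x y * φ x * rhoFun ρ₁ ρ₂ x)
      (nhdsWithin 0 (Set.Ioi 0)) (nhds (φ y * rhoFun ρ₁ ρ₂ y)) := by
  have hs1 : (0:ℝ) < Real.sqrt a₁ := Real.sqrt_pos.2 ha₁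
  have hs2 : (0:ℝ) < Real.sqrt a₂ := Real.sqrt_pos.2 ha₂
  -- |β| ≤ 1
  have hβ1 : |β| ≤ 1 := by
    rw [hβ, hα]
    have e2 : Real.sqrt a₂ * (1 - ρ₁ * a₁ / (ρ₂ * a₂) - 1)
        = -(Real.sqrt a₂ * (ρ₁ * a₁ / (ρ₂ * a₂))) := by ring
    rw [e2]
    set c := Real.sqrt a₂ * (ρ₁ * a₁ / (ρ₂ * a₂)) with hc
    have hcpos : 0 < c := by positivity
    have hden : 0 < Real.sqrt a₁ - -c := by linarith
    rw [abs_div, abs_of_pos hden, div_le_one hden]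
    rw [abs_le]
    constructor <;> linarith
  have hb1 : |β * signFun y| ≤ 1 := by
    rw [abs_mul]
    calc |β| * |signFun y| ≤ 1 * 1 :=
      mul_le_mul hβ1 (abs_signFun_le y) (abs_nonneg _) zero_le_one
    _ = 1 := one_mul 1
  set g : ℝ → ℝ := fun x => φ x * rhoFun ρ₁ ρ₂ x with hg
  -- nonnegativity
  have hnφ : ∀ᶠ t in nhdsWithin (0:ℝ) (Set.Ioi 0), ∀ x, 0 ≤ G a₁ a₂ β t x y := by
    filter_upwards [self_mem_nhdsWithin] with t (ht : (0:ℝ) < t) x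
    exact G_nonneg hβ1 ht x y
  -- measurability
  have hfmeas : Measurable (fPiece a₁ a₂) := by
    unfold fPiece
    exact Measurable.ite measurableSet_Iic (measurable_id.div_const _)
      (measurable_id.div_const _)
  have hmeas : ∀ᶠ t in nhdsWithin (0:ℝ) (Set.Ioi 0),
      AEStronglyMeasurable (fun x => G a₁ a₂ β t x y) (volume : Measure ℝ) := by
    refine Filter.Eventually.of_forall fun t => ?_
    have hH : Continuous (fun u : ℝ => (1 / Real.sqrt (2 * Real.pi * t)) *
        (if y ≤ 0 then 1 / Real.sqrt a₁ else 1 / Real.sqrt a₂) *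
        (Real.exp (-(u - fPiece a₁ a₂ y) ^ 2 / (2 * t)) +
          β * signFun y * Real.exp (-(|u| + |fPiece a₁ a₂ y|) ^ 2 / (2 * t)))) := by
      fun_prop
    exact ((hH.measurable).comp hfmeas).aestronglyMeasurable
  -- integrability of g
  have hρmeas : Measurable (rhoFun ρ₁ ρ₂) := by
    unfold rhoFun
    exact Measurable.ite measurableSet_Iic measurable_const measurable_const
  have hmg : Integrable g := by
    have hφint : Integrable φ := hφ.integrable_of_hasCompactSupport hφc
    refine Integrable.mono' ((hφint.abs).const_mul (max ρ₁ ρ₂))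
      ((hφ.measurable.mul hρmeas).aestronglyMeasurable) ?_
    filter_upwards with x
    have hρb : |rhoFun ρ₁ ρ₂ x| ≤ max ρ₁ ρ₂ := by
      unfold rhoFun
      split_ifs
      · rw [abs_of_pos hρ₁]; exact le_max_left _ _
      · rw [abs_of_pos hρ₂]; exact le_max_right _ _
    rw [hg]
    simp only [Real.norm_eq_abs, abs_mul]
    calc |φ x| * |rhoFun ρ₁ ρ₂ x| ≤ |φ x| * max ρ₁ ρ₂ :=
        mul_le_mul_of_nonneg_left hρb (abs_nonneg _)
      _ = max ρ₁ ρ₂ * |φ x| := mul_comm _ _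
  -- uniform vanishing away from y
  have hlφ : ∀ u : Set ℝ, IsOpen u → y ∈ u →
      TendstoUniformlyOn (fun t x => G a₁ a₂ β t x y) 0 (nhdsWithin (0:ℝ) (Set.Ioi 0)) uᶜ := by
    intro u hu hyu
    obtain ⟨r, hr, hball⟩ := Metric.isOpen_iff.1 hu y hyu
    have hmax : (0:ℝ) < max a₁ a₂ := lt_max_of_lt_left ha₁
    have hmin : (0:ℝ) < Real.sqrt (min a₁ a₂) := Real.sqrt_pos.2 (lt_min ha₁ ha₂)
    have hK : (0:ℝ) < r ^ 2 / (2 * max a₁ a₂) := by positivity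
    have hM := sqrt_inv_exp_tail ((Real.sqrt (min a₁ a₂))⁻¹ * 2) hK
    rw [Metric.tendstoUniformlyOn_iff]
    intro ε hε
    filter_upwards [hM.eventually_lt_const hε, self_mem_nhdsWithin]
      with t hMt (ht : (0:ℝ) < t) x hx
    rw [Pi.zero_apply, dist_zero_left, Real.norm_of_nonneg (G_nonneg hβ1 ht x y)]
    refine lt_of_le_of_lt ?_ hMt
    -- G t x y ≤ M t
    have hdist : r ≤ |x - y| := by
      have hxnot : x ∉ Metric.ball y r := fun h => hx (hball h)
      rw [Metric.mem_ball, not_lt, Real.dist_eq] at hxnot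
      exact hxnot
    have hE1 : Real.exp (-(fPiece a₁ a₂ x - fPiece a₁ a₂ y) ^ 2 / (2 * t))
        ≤ Real.exp (-(r ^ 2 / (2 * max a₁ a₂) / t)) := by
      apply Real.exp_le_exp.2
      have hstep : r / Real.sqrt (max a₁ a₂) ≤ |fPiece a₁ a₂ x - fPiece a₁ a₂ y| := by
        refine le_trans ?_ (fPiece_lower ha₁ ha₂ x y)
        gcongr
      have hsq : (r / Real.sqrt (max a₁ a₂)) ^ 2 ≤ (fPiece a₁ a₂ x - fPiece a₁ a₂ y) ^ 2 := by
        rw [← sq_abs (fPiece a₁ a₂ x - fPiece a₁ a₂ y)]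
        exact pow_le_pow_left₀ (by positivity) hstep 2
      have hsq2 : (r / Real.sqrt (max a₁ a₂)) ^ 2 = r ^ 2 / max a₁ a₂ := by
        rw [div_pow, Real.sq_sqrt hmax.le]
      have e3 : -(r ^ 2 / (2 * max a₁ a₂) / t) = -(r ^ 2 / max a₁ a₂) / (2 * t) := by
        field_simp
      rw [e3]
      rw [div_le_div_iff_of_pos_right (by linarith : (0:ℝ) < 2 * t)]
      apply neg_le_neg
      rw [← hsq2]
      exact hsq
    have hE2 : Real.exp (-(|fPiece a₁ a₂ x| + |fPiece a₁ a₂ y|) ^ 2 / (2 * t))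
        ≤ Real.exp (-(fPiece a₁ a₂ x - fPiece a₁ a₂ y) ^ 2 / (2 * t)) := exp_sq_le ht x y
    have hcle : (if y ≤ 0 then 1 / Real.sqrt a₁ else 1 / Real.sqrt a₂)
        ≤ (Real.sqrt (min a₁ a₂))⁻¹ := by
      have l1 : Real.sqrt (min a₁ a₂) ≤ Real.sqrt a₁ := Real.sqrt_le_sqrt (min_le_left _ _)
      have l2 : Real.sqrt (min a₁ a₂) ≤ Real.sqrt a₂ := Real.sqrt_le_sqrt (min_le_right _ _)
      split_ifs
      · rw [one_div]; exact inv_anti₀ hmin l1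
      · rw [one_div]; exact inv_anti₀ hmin l2
    have hbr : Real.exp (-(fPiece a₁ a₂ x - fPiece a₁ a₂ y) ^ 2 / (2 * t)) +
        β * signFun y * Real.exp (-(|fPiece a₁ a₂ x| + |fPiece a₁ a₂ y|) ^ 2 / (2 * t))
        ≤ 2 * Real.exp (-(r ^ 2 / (2 * max a₁ a₂) / t)) := by
      have h1 : β * signFun y * Real.exp (-(|fPiece a₁ a₂ x| + |fPiece a₁ a₂ y|) ^ 2 / (2 * t))
          ≤ Real.exp (-(|fPiece a₁ a₂ x| + |fPiece a₁ a₂ y|) ^ 2 / (2 * t)) := by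
        have h2 : β * signFun y ≤ 1 := le_trans (le_abs_self _) hb1
        nlinarith [Real.exp_pos (-(|fPiece a₁ a₂ x| + |fPiece a₁ a₂ y|) ^ 2 / (2 * t))]
      linarith
    unfold G
    rw [one_div, mul_assoc]
    calc (Real.sqrt (2 * Real.pi * t))⁻¹ *
          ((if y ≤ 0 then 1 / Real.sqrt a₁ else 1 / Real.sqrt a₂) *
          (Real.exp (-(fPiece a₁ a₂ x - fPiece a₁ a₂ y) ^ 2 / (2 * t)) +
            β * signFun y * Real.exp (-(|fPiece a₁ a₂ x| + |fPiece a₁ a₂ y|) ^ 2 / (2 * t))))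
        ≤ (Real.sqrt (2 * Real.pi * t))⁻¹ *
          ((Real.sqrt (min a₁ a₂))⁻¹ * (2 * Real.exp (-(r ^ 2 / (2 * max a₁ a₂) / t)))) := by
          refine mul_le_mul_of_nonneg_left ?_ (by positivity)
          refine mul_le_mul hcle hbr ?_ (by positivity)
          have hsgn : -1 ≤ β * signFun y := by
            have := neg_abs_le (β * signFun y); linarith
          have hmm := mul_le_mul_of_nonneg_right hsgn
            (Real.exp_pos (-(|fPiece a₁ a₂ x| + |fPiece a₁ a₂ y|) ^ 2 / (2 * t))).le
          nlinarith [hE2]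
      _ = (Real.sqrt (2 * Real.pi * t))⁻¹ * ((Real.sqrt (min a₁ a₂))⁻¹ * 2) *
            Real.exp (-(r ^ 2 / (2 * max a₁ a₂) / t)) := by ring
  rcases lt_or_gt_of_ne hy with hyneg | hypos
  · -- case y < 0
    have hT : MeasurableSet (Ioo (2*y) (y/2)) := measurableSet_Ioo
    have hTnhds : Ioo (2*y) (y/2) ∈ nhds y :=
      isOpen_Ioo.mem_nhds ⟨by linarith, by linarith⟩
    have hTfin : volume (Ioo (2*y) (y/2)) ≠ ⊤ := by
      rw [Real.volume_Ioo]; exact ENNReal.ofReal_ne_top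
    have hcg : Tendsto g (nhds y) (nhds (φ y * rhoFun ρ₁ ρ₂ y)) := by
      have hval : rhoFun ρ₁ ρ₂ y = ρ₁ := if_pos hyneg.le
      have hcont : Tendsto (fun x => φ x * ρ₁) (nhds y) (nhds (φ y * rhoFun ρ₁ ρ₂ y)) := by
        rw [hval]
        exact ((hφ.mul continuous_const).tendsto y)
      refine hcont.congr' ?_
      filter_upwards [Iio_mem_nhds hyneg] with x (hx : x < 0)
      simp [hg, rhoFun, hx.le]
    have hsgn : signFun y = -1 := by
      unfold signFun
      rw [if_neg (not_lt.2 hyneg.le), if_pos hyneg]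
    have hu₀ : y / Real.sqrt a₁ < 0 := div_neg_of_neg_of_pos hyneg hs1
    have hl : 2*y/Real.sqrt a₁ < y/Real.sqrt a₁ := by gcongr; linarith
    have hu : y/Real.sqrt a₁ < y/2/Real.sqrt a₁ := by gcongr; linarith
    have hr0 : y/2/Real.sqrt a₁ < 0 := div_neg_of_neg_of_pos (by linarith) hs1
    have hiφ : Tendsto (fun t => ∫ x in Ioo (2*y) (y/2), G a₁ a₂ β t x y)
        (nhdsWithin (0:ℝ) (Set.Ioi 0)) (nhds 1) := by
      have hkey := key_neg (b := β * signFun y) (l := 2*y/Real.sqrt a₁)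
        (r := y/2/Real.sqrt a₁) (u₀ := y/Real.sqrt a₁) hb1 hr0 hl hu
      refine hkey.congr fun t => ?_
      set Fn : ℝ → ℝ := fun u => Real.exp (-(u - y/Real.sqrt a₁)^2/(2*t)) +
        β * signFun y * Real.exp (-(u + y/Real.sqrt a₁)^2/(2*t)) with hFn
      have hset : ∀ x ∈ Ioo (2*y) (y/2), G a₁ a₂ β t x y
          = (Real.sqrt (2*Real.pi*t))⁻¹ * (Real.sqrt a₁)⁻¹ * Fn (x / Real.sqrt a₁) := by
        intro x hx
        rw [mem_Ioo] at hx
        have hx0 : x ≤ 0 := by linarith [hx.2]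
        have hy0 : y ≤ 0 := hyneg.le
        unfold G fPiece
        rw [if_pos hx0, if_pos hy0, if_pos hy0]
        simp only [hFn]
        rw [hsgn]
        rw [abs_of_nonpos (div_nonpos_of_nonpos_of_nonneg hx0 hs1.le),
          abs_of_nonpos (div_nonpos_of_nonpos_of_nonneg hy0 hs1.le)]
        have e : (-(x / Real.sqrt a₁) + -(y / Real.sqrt a₁))^2
            = (x / Real.sqrt a₁ + y / Real.sqrt a₁)^2 := by ring
        rw [e, one_div]
        ring
      symm
      calc ∫ x in Ioo (2*y) (y/2), G a₁ a₂ β t x y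
          = ∫ x in Ioo (2*y) (y/2),
              (Real.sqrt (2*Real.pi*t))⁻¹ * (Real.sqrt a₁)⁻¹ * Fn (x / Real.sqrt a₁) :=
            setIntegral_congr_fun hT hset
        _ = (Real.sqrt (2*Real.pi*t))⁻¹ * (Real.sqrt a₁)⁻¹ *
              ∫ x in Ioo (2*y) (y/2), Fn (x / Real.sqrt a₁) := by
            rw [integral_const_mul]
        _ = (Real.sqrt (2*Real.pi*t))⁻¹ * (Real.sqrt a₁)⁻¹ *
              ∫ x in (2*y)..(y/2), Fn (x / Real.sqrt a₁) := by
            rw [← integral_Ioc_eq_integral_Ioo,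
              ← intervalIntegral.integral_of_le (by linarith : 2*y ≤ y/2)]
        _ = (Real.sqrt (2*Real.pi*t))⁻¹ * (Real.sqrt a₁)⁻¹ *
              (Real.sqrt a₁ • ∫ u in (2*y/Real.sqrt a₁)..(y/2/Real.sqrt a₁), Fn u) := by
            rw [intervalIntegral.integral_comp_div _ hs1.ne']
        _ = (Real.sqrt (2*Real.pi*t))⁻¹ *
              ∫ u in Ioc (2*y/Real.sqrt a₁) (y/2/Real.sqrt a₁), Fn u := by
            rw [intervalIntegral.integral_of_le (hl.le.trans hu.le), smul_eq_mul,
              mul_assoc, ← mul_assoc (Real.sqrt a₁)⁻¹, inv_mul_cancel₀ hs1.ne', one_mul]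
    have main := tendsto_integral_peak_smul_of_integrable_of_tendsto
      (μ := volume) (φ := fun t x => G a₁ a₂ β t x y) (g := g)
      hT hTnhds hTfin hnφ hlφ hiφ hmeas hmg hcg
    refine main.congr fun t => ?_
    congr 1
    funext x
    simp only [smul_eq_mul, hg, mul_assoc]
  · -- case y > 0
    have hT : MeasurableSet (Ioo (y/2) (2*y)) := measurableSet_Ioo
    have hTnhds : Ioo (y/2) (2*y) ∈ nhds y :=
      isOpen_Ioo.mem_nhds ⟨by linarith, by linarith⟩
    have hTfin : volume (Ioo (y/2) (2*y)) ≠ ⊤ := by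
      rw [Real.volume_Ioo]; exact ENNReal.ofReal_ne_top
    have hcg : Tendsto g (nhds y) (nhds (φ y * rhoFun ρ₁ ρ₂ y)) := by
      have hval : rhoFun ρ₁ ρ₂ y = ρ₂ := if_neg (not_le.2 hypos)
      have hcont : Tendsto (fun x => φ x * ρ₂) (nhds y) (nhds (φ y * rhoFun ρ₁ ρ₂ y)) := by
        rw [hval]
        exact ((hφ.mul continuous_const).tendsto y)
      refine hcont.congr' ?_
      filter_upwards [Ioi_mem_nhds hypos] with x (hx : 0 < x)
      simp [hg, rhoFun, not_le.2 hx]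
    have hsgn : signFun y = 1 := if_pos hypos
    have hl0 : 0 < y/2/Real.sqrt a₂ := div_pos (by linarith) hs2
    have hl : y/2/Real.sqrt a₂ < y/Real.sqrt a₂ := by gcongr; linarith
    have hu : y/Real.sqrt a₂ < 2*y/Real.sqrt a₂ := by gcongr; linarith
    have hiφ : Tendsto (fun t => ∫ x in Ioo (y/2) (2*y), G a₁ a₂ β t x y)
        (nhdsWithin (0:ℝ) (Set.Ioi 0)) (nhds 1) := by
      have hkey := key_pos (b := β * signFun y) (l := y/2/Real.sqrt a₂)
        (r := 2*y/Real.sqrt a₂) (u₀ := y/Real.sqrt a₂) hb1 hl0 hl hu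
      refine hkey.congr fun t => ?_
      set Fn : ℝ → ℝ := fun u => Real.exp (-(u - y/Real.sqrt a₂)^2/(2*t)) +
        β * signFun y * Real.exp (-(u + y/Real.sqrt a₂)^2/(2*t)) with hFn
      have hset : ∀ x ∈ Ioo (y/2) (2*y), G a₁ a₂ β t x y
          = (Real.sqrt (2*Real.pi*t))⁻¹ * (Real.sqrt a₂)⁻¹ * Fn (x / Real.sqrt a₂) := by
        intro x hx
        rw [mem_Ioo] at hx
        have hx0 : ¬ x ≤ 0 := not_le.2 (by linarith [hx.1])
        have hy0 : ¬ y ≤ 0 := not_le.2 hypos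
        unfold G fPiece
        rw [if_neg hx0, if_neg hy0, if_neg hy0]
        simp only [hFn]
        rw [hsgn]
        rw [abs_of_pos (div_pos (by linarith [hx.1]) hs2),
          abs_of_pos (div_pos hypos hs2)]
        rw [one_div]
        ring
      symm
      calc ∫ x in Ioo (y/2) (2*y), G a₁ a₂ β t x y
          = ∫ x in Ioo (y/2) (2*y),
              (Real.sqrt (2*Real.pi*t))⁻¹ * (Real.sqrt a₂)⁻¹ * Fn (x / Real.sqrt a₂) :=
            setIntegral_congr_fun hT hset
        _ = (Real.sqrt (2*Real.pi*t))⁻¹ * (Real.sqrt a₂)⁻¹ *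
              ∫ x in Ioo (y/2) (2*y), Fn (x / Real.sqrt a₂) := by
            rw [integral_const_mul]
        _ = (Real.sqrt (2*Real.pi*t))⁻¹ * (Real.sqrt a₂)⁻¹ *
              ∫ x in (y/2)..(2*y), Fn (x / Real.sqrt a₂) := by
            rw [← integral_Ioc_eq_integral_Ioo,
              ← intervalIntegral.integral_of_le (by linarith : y/2 ≤ 2*y)]
        _ = (Real.sqrt (2*Real.pi*t))⁻¹ * (Real.sqrt a₂)⁻¹ *
              (Real.sqrt a₂ • ∫ u in (y/2/Real.sqrt a₂)..(2*y/Real.sqrt a₂), Fn u) := by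
            rw [intervalIntegral.integral_comp_div _ hs2.ne']
        _ = (Real.sqrt (2*Real.pi*t))⁻¹ *
              ∫ u in Ioc (y/2/Real.sqrt a₂) (2*y/Real.sqrt a₂), Fn u := by
            rw [intervalIntegral.integral_of_le (hl.le.trans hu.le), smul_eq_mul,
              mul_assoc, ← mul_assoc (Real.sqrt a₂)⁻¹, inv_mul_cancel₀ hs2.ne', one_mul]
    have main := tendsto_integral_peak_smul_of_integrable_of_tendsto
      (μ := volume) (φ := fun t x => G a₁ a₂ β t x y) (g := g)
      hT hTnhds hTfin hnφ hlφ hiφ hmeas hmg hcg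
    refine main.congr fun t => ?_
    congr 1
    funext x
    simp only [smul_eq_mul, hg, mul_assoc]
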